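/- For every ε ∈ (0,1) there exists δ > 0 such that for all a, b ∈ [0, δ), the derivative of the function b ↦ V(a,b) exists and equals the (N−1)-dimensional Lebesgue volume of the section S(a,b) = {(x₂,…,xₙ, y) ∈ ℝⁿ⁻¹ × ℝᵐ : (a·y₁ + b, x₂, …, xₙ, y) ∈ W}, i.e. of the orthogonal projection of W ∩ {x₁ = a·y₁ + b} to the coordinate hyperplane {x₁ = 0}. -/

import Mathlib

set_option maxHeartbeats 1000000
set_option synthInstance.maxHeartbeats 1000000

open MeasureTheory

lemma euc_norm_sq {N : ℕ} (x : EuclideanSpace ℝ (Fin N)) : ‖x‖ ^ 2 = ∑ i, x i ^ 2 := by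
  rw [EuclideanSpace.norm_eq, Real.sq_sqrt (by positivity)]
  simp [sq_abs]

lemma euc_cons_norm {n : ℕ} (t : ℝ) (w : EuclideanSpace ℝ (Fin n)) :
    ‖(WithLp.toLp 2 (Fin.cons t w.ofLp : Fin (n+1) → ℝ) : EuclideanSpace ℝ (Fin (n+1)))‖ ^ 2 = t ^ 2 + ‖w‖ ^ 2 := by
  rw [euc_norm_sq, euc_norm_sq, Fin.sum_univ_succ]
  simp

lemma consMP (n : ℕ) : MeasurePreserving
    (fun p : ℝ × EuclideanSpace ℝ (Fin n) =>
      (WithLp.toLp 2 (Fin.cons p.1 p.2.ofLp : Fin (n+1) → ℝ) : EuclideanSpace ℝ (Fin (n+1))))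
    (volume.prod volume) volume := by
  have h1 := (EuclideanSpace.volume_preserving_symm_measurableEquiv_toLp (Fin (n+1))).symm
  have h2 := (volume_preserving_piFinSuccAbove (fun _ : Fin (n+1) => ℝ) 0).symm
  have h3 := (MeasurePreserving.id (volume : Measure ℝ)).prod
    (EuclideanSpace.volume_preserving_symm_measurableEquiv_toLp (Fin n))
  have hcomp := (h1.comp h2).comp h3
  have hfun : ((⇑(MeasurableEquiv.toLp 2 (Fin (n + 1) → ℝ)).symm.symm ∘
      ⇑(MeasurableEquiv.piFinSuccAbove (fun _ : Fin (n+1) => ℝ) 0).symm) ∘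
      Prod.map id ⇑(MeasurableEquiv.toLp 2 (Fin n → ℝ)).symm)
      = (fun p : ℝ × EuclideanSpace ℝ (Fin n) =>
      (WithLp.toLp 2 (Fin.cons p.1 p.2.ofLp : Fin (n+1) → ℝ) : EuclideanSpace ℝ (Fin (n+1)))) := by
    funext p
    show (WithLp.toLp 2 (Fin.insertNth 0 p.1 p.2.ofLp) : EuclideanSpace ℝ (Fin (n+1))) = _
    simp only [Fin.insertNth_zero']
  exact hfun ▸ hcomp

section
variable {k m : ℕ} (hm : 1 ≤ m)

local notation "X" => EuclideanSpace ℝ (Fin (2*k))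
local notation "F" => EuclideanSpace ℝ (Fin m)
local notation "E" => EuclideanSpace ℝ (Fin (2*k+1))

lemma shearMP (a : ℝ) : MeasurePreserving
    (fun p : ℝ × (X × F) => (p.1 + a * p.2.2 ⟨0, hm⟩, p.2))
    ((volume : Measure ℝ).prod (volume.prod volume))
    ((volume : Measure ℝ).prod (volume.prod volume)) := by
  have hco : Continuous (fun q : X × F => q.2 ⟨0, hm⟩) :=
    (EuclideanSpace.proj (⟨0, hm⟩ : Fin m)).continuous.comp continuous_snd
  have hT : MeasurePreserving
      (fun p : (X × F) × ℝ => (p.1, p.2 + a * p.1.2 ⟨0, hm⟩))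
      ((volume.prod volume).prod volume) ((volume.prod volume).prod volume) := by
    refine MeasurePreserving.skew_product (MeasurePreserving.id _)
      (g := fun (q : X × F) (s : ℝ) => s + a * q.2 ⟨0, hm⟩)
      (measurable_snd.add ((hco.measurable.comp measurable_fst).const_mul a))
      (Filter.Eventually.of_forall fun q => map_add_right_eq_self volume _)
  have hswap1 : MeasurePreserving (Prod.swap : ℝ × (X × F) → (X × F) × ℝ)
      (volume.prod (volume.prod volume)) ((volume.prod volume).prod volume) :=
    Measure.measurePreserving_swap
  have hswap2 : MeasurePreserving (Prod.swap : (X × F) × ℝ → ℝ × (X × F))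
      ((volume.prod volume).prod volume) (volume.prod (volume.prod volume)) :=
    Measure.measurePreserving_swap
  have := (hswap2.comp hT).comp hswap1
  exact this

lemma PhiMP (a : ℝ) : MeasurePreserving
    (fun p : ℝ × (X × F) =>
      ((WithLp.toLp 2 (Fin.cons (p.1 + a * p.2.2 ⟨0, hm⟩) p.2.1.ofLp : Fin (2*k+1) → ℝ) : E), p.2.2))
    ((volume : Measure ℝ).prod (volume.prod volume))
    ((volume : Measure E).prod volume) := by
  have h2 := (measurePreserving_prodAssoc (volume : Measure ℝ)
      (volume : Measure X) (volume : Measure F)).symm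
  have h3 := (consMP (2*k)).prod (MeasurePreserving.id (volume : Measure F))
  have := (h3.comp h2).comp (shearMP hm a)
  exact this

end

section
variable {k m : ℕ} (hm : 1 ≤ m)

local notation "X" => EuclideanSpace ℝ (Fin (2*k))
local notation "F" => EuclideanSpace ℝ (Fin m)
local notation "E" => EuclideanSpace ℝ (Fin (2*k+1))

lemma euc_cons_zero {n : ℕ} (t : ℝ) (w : EuclideanSpace ℝ (Fin n)) :
    (WithLp.toLp 2 (Fin.cons t w.ofLp : Fin (n+1) → ℝ) : EuclideanSpace ℝ (Fin (n+1))) 0 = t := rfl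

lemma meas_cond (a ε s : ℝ) : MeasurableSet {q : X × F |
    ((a * q.2 ⟨0, hm⟩ + s) ^ 2 + ‖q.1‖ ^ 2 - 1) ^ 2 + ‖q.2‖ ^ 2 ≤ ε ^ 2} := by
  have hc : Continuous fun q : X × F =>
      ((a * q.2 ⟨0, hm⟩ + s) ^ 2 + ‖q.1‖ ^ 2 - 1) ^ 2 + ‖q.2‖ ^ 2 := by fun_prop
  exact measurableSet_le hc.measurable measurable_const

lemma step1 (a ε : ℝ) (b' : ℝ) :
    (volume : Measure (E × F)) {p : E × F |
        ((‖p.1‖ ^ 2 - 1) ^ 2 + ‖p.2‖ ^ 2 ≤ ε ^ 2) ∧ p.1 0 < a * p.2 ⟨0, hm⟩ + b'}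
    = ∫⁻ s in Set.Iio b', volume {q : X × F |
        ((a * q.2 ⟨0, hm⟩ + s) ^ 2 + ‖q.1‖ ^ 2 - 1) ^ 2 + ‖q.2‖ ^ 2 ≤ ε ^ 2} := by
  have hS : MeasurableSet {p : E × F |
      ((‖p.1‖ ^ 2 - 1) ^ 2 + ‖p.2‖ ^ 2 ≤ ε ^ 2) ∧ p.1 0 < a * p.2 ⟨0, hm⟩ + b'} := by
    apply MeasurableSet.inter
    · have hc : Continuous fun p : E × F => (‖p.1‖ ^ 2 - 1) ^ 2 + ‖p.2‖ ^ 2 := by fun_prop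
      exact measurableSet_le hc.measurable measurable_const
    · have h1 : Continuous fun p : E × F => p.1 0 := by fun_prop
      have h2 : Continuous fun p : E × F => a * p.2 ⟨0, hm⟩ + b' := by fun_prop
      exact measurableSet_lt h1.measurable h2.measurable
  have hT : MeasurableSet {p : ℝ × (X × F) |
      (((a * p.2.2 ⟨0, hm⟩ + p.1) ^ 2 + ‖p.2.1‖ ^ 2 - 1) ^ 2 + ‖p.2.2‖ ^ 2 ≤ ε ^ 2)
        ∧ p.1 < b'} := by
    apply MeasurableSet.inter
    · have hc : Continuous fun p : ℝ × (X × F) =>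
          ((a * p.2.2 ⟨0, hm⟩ + p.1) ^ 2 + ‖p.2.1‖ ^ 2 - 1) ^ 2 + ‖p.2.2‖ ^ 2 := by fun_prop
      exact measurableSet_le hc.measurable measurable_const
    · exact measurableSet_lt measurable_fst measurable_const
  rw [Measure.volume_eq_prod, ← (PhiMP hm a).measure_preimage hS.nullMeasurableSet]
  have hpre : (fun p : ℝ × (X × F) =>
        ((WithLp.toLp 2 (Fin.cons (p.1 + a * p.2.2 ⟨0, hm⟩) p.2.1.ofLp : Fin (2*k+1) → ℝ) : E), p.2.2)) ⁻¹'
      {p : E × F | ((‖p.1‖ ^ 2 - 1) ^ 2 + ‖p.2‖ ^ 2 ≤ ε ^ 2)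
        ∧ p.1 0 < a * p.2 ⟨0, hm⟩ + b'}
      = {p : ℝ × (X × F) |
        (((a * p.2.2 ⟨0, hm⟩ + p.1) ^ 2 + ‖p.2.1‖ ^ 2 - 1) ^ 2 + ‖p.2.2‖ ^ 2 ≤ ε ^ 2)
          ∧ p.1 < b'} := by
    ext p
    rw [Set.mem_preimage]
    simp only [Set.mem_setOf_eq, euc_cons_norm, euc_cons_zero, Fin.cons_zero]
    rw [add_comm p.1 (a * p.2.2 ⟨0, hm⟩), add_lt_add_iff_left]
  rw [hpre, Measure.prod_apply hT]
  have hslice : ∀ s : ℝ, ((volume : Measure X).prod volume) (Prod.mk s ⁻¹' {p : ℝ × (X × F) |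
        (((a * p.2.2 ⟨0, hm⟩ + p.1) ^ 2 + ‖p.2.1‖ ^ 2 - 1) ^ 2 + ‖p.2.2‖ ^ 2 ≤ ε ^ 2)
          ∧ p.1 < b'})
      = (Set.Iio b').indicator (fun s => volume {q : X × F |
        ((a * q.2 ⟨0, hm⟩ + s) ^ 2 + ‖q.1‖ ^ 2 - 1) ^ 2 + ‖q.2‖ ^ 2 ≤ ε ^ 2}) s := by
    intro s
    by_cases hs : s < b'
    · rw [Set.indicator_of_mem (show s ∈ Set.Iio b' from hs), ← Measure.volume_eq_prod]
      congr 1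
      ext q
      simp [Set.mem_setOf_eq, hs]
    · rw [Set.indicator_of_notMem (show s ∉ Set.Iio b' from hs)]
      have he : Prod.mk s ⁻¹' {p : ℝ × (X × F) |
          (((a * p.2.2 ⟨0, hm⟩ + p.1) ^ 2 + ‖p.2.1‖ ^ 2 - 1) ^ 2 + ‖p.2.2‖ ^ 2 ≤ ε ^ 2)
            ∧ p.1 < b'} = ∅ := by
        ext q; simp [hs]
      rw [he, measure_empty]
  rw [lintegral_congr hslice, lintegral_indicator measurableSet_Iio]

end

lemma lip_aux (u c N2 W w : ℝ) (h1 : (u^2+c)^2 ≤ 1) (hc0 : -1 ≤ c) (hw : |w| ≤ W)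
    (hW1 : W ≤ 1) : ((u+w)^2+c)^2 + N2^2 ≤ (u^2+c)^2 + N2^2 + 100*W := by
  have hW0 : 0 ≤ W := le_trans (abs_nonneg w) hw
  have hA1 : |u^2 + c| ≤ 1 := by
    nlinarith [sq_abs (u^2+c), abs_nonneg (u^2+c)]
  have hu2 : u^2 ≤ 2 := by
    have h := (abs_le.1 hA1).2
    linarith
  have hu : |u| ≤ 3/2 := by nlinarith [sq_abs u, abs_nonneg u]
  have h4 : |u| * |w| ≤ (3/2)*W := by
    have := mul_le_mul hu hw (abs_nonneg w) (by norm_num)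
    linarith
  have h5 : |w| * |w| ≤ W := by
    have h6 := mul_le_mul hw hw (abs_nonneg w) hW0
    nlinarith
  have hdle : |2*u*w + w^2| ≤ 4*W := by
    have e1 : |2*u*w + w^2| ≤ |2*u*w| + |w^2| := abs_add_le _ _
    have e2 : |2*u*w| = 2*(|u| * |w|) := by
      rw [abs_mul, abs_mul, abs_two]; ring
    have e3 : |w^2| = |w| * |w| := by rw [abs_pow, sq]
    linarith
  have hAd : (u^2+c)*(2*u*w+w^2) ≤ 4*W := by
    calc (u^2+c)*(2*u*w+w^2) ≤ |(u^2+c)*(2*u*w+w^2)| := le_abs_self _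
      _ = |u^2+c| * |2*u*w+w^2| := abs_mul _ _
      _ ≤ 1*(4*W) := mul_le_mul hA1 hdle (abs_nonneg _) one_pos.le
      _ = 4*W := one_mul _
  have hdd : (2*u*w+w^2)^2 ≤ 16*W := by
    nlinarith [sq_abs (2*u*w+w^2), abs_nonneg (2*u*w+w^2)]
  nlinarith [hAd, hdd]

section
variable {k m : ℕ} (hm : 1 ≤ m)

local notation "X" => EuclideanSpace ℝ (Fin (2*k))
local notation "F" => EuclideanSpace ℝ (Fin m)

lemma euc_coord_sq_le {N : ℕ} (x : EuclideanSpace ℝ (Fin N)) (j : Fin N) :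
    x j ^ 2 ≤ ‖x‖ ^ 2 := by
  rw [euc_norm_sq]
  exact Finset.single_le_sum (f := fun i => x i ^ 2) (fun i _ => sq_nonneg _)
    (Finset.mem_univ j)

lemma g_subset (a ε s : ℝ) (hε0 : 0 ≤ ε) (hε1 : ε ≤ 1) :
    {q : X × F | ((a * q.2 ⟨0, hm⟩ + s) ^ 2 + ‖q.1‖ ^ 2 - 1) ^ 2 + ‖q.2‖ ^ 2 ≤ ε ^ 2}
      ⊆ Metric.closedBall (0 : X) 2 ×ˢ Metric.closedBall (0 : F) 2 := by
  intro q hq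
  simp only [Set.mem_setOf_eq] at hq
  have hn1 : (0:ℝ) ≤ ‖q.1‖ := norm_nonneg _
  have hn2 : (0:ℝ) ≤ ‖q.2‖ := norm_nonneg _
  constructor
  · rw [Metric.mem_closedBall, dist_zero_right]
    nlinarith [sq_nonneg (a * q.2 ⟨0, hm⟩ + s), sq_nonneg ‖q.2‖,
      sq_nonneg ((a * q.2 ⟨0, hm⟩ + s) ^ 2 + ‖q.1‖ ^ 2 - 1 - 3/2),
      sq_nonneg (‖q.1‖ - 2)]
  · rw [Metric.mem_closedBall, dist_zero_right]
    nlinarith [sq_nonneg ((a * q.2 ⟨0, hm⟩ + s) ^ 2 + ‖q.1‖ ^ 2 - 1),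
      sq_nonneg (‖q.2‖ - 2)]

lemma K_fin : (volume : Measure (X × F))
    (Metric.closedBall (0 : X) 2 ×ˢ Metric.closedBall (0 : F) 2) < ⊤ := by
  rw [Measure.volume_eq_prod, Measure.prod_prod]
  exact ENNReal.mul_lt_top measure_closedBall_lt_top measure_closedBall_lt_top

lemma g_vanish (a ε s : ℝ) (ha0 : 0 ≤ a) (ha1 : a ≤ 1) (hε0 : 0 ≤ ε) (hε1 : ε ≤ 1) (hs : s ≤ -4) :
    {q : X × F | ((a * q.2 ⟨0, hm⟩ + s) ^ 2 + ‖q.1‖ ^ 2 - 1) ^ 2 + ‖q.2‖ ^ 2 ≤ ε ^ 2}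
      = ∅ := by
  ext q
  simp only [Set.mem_setOf_eq, Set.mem_empty_iff_false, iff_false]
  intro hq
  have hy : (q.2 ⟨0, hm⟩) ^ 2 ≤ 1 := by
    have h1 := euc_coord_sq_le q.2 ⟨0, hm⟩
    nlinarith [sq_nonneg ((a * q.2 ⟨0, hm⟩ + s) ^ 2 + ‖q.1‖ ^ 2 - 1), norm_nonneg q.2]
  have hy1 : |q.2 ⟨0, hm⟩| ≤ 1 := by nlinarith [sq_abs (q.2 ⟨0, hm⟩), abs_nonneg (q.2 ⟨0, hm⟩)]
  have hay : |a * q.2 ⟨0, hm⟩| ≤ 1 := by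
    rw [abs_mul]
    have : |a| ≤ 1 := by rw [abs_of_nonneg ha0]; exact ha1
    nlinarith [abs_nonneg (q.2 ⟨0, hm⟩), abs_nonneg a]
  have hu : a * q.2 ⟨0, hm⟩ + s ≤ -3 := by
    have := (abs_le.1 hay).2
    linarith
  have hu2 : (a * q.2 ⟨0, hm⟩ + s) ^ 2 ≥ 9 := by nlinarith
  nlinarith [sq_nonneg ‖q.1‖, sq_nonneg ‖q.2‖, norm_nonneg q.1,
    sq_nonneg ((a * q.2 ⟨0, hm⟩ + s) ^ 2 + ‖q.1‖ ^ 2 - 1 - 8)]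

lemma normsq_null (hk : 1 ≤ k) (c : ℝ) : (volume : Measure X) {x : X | ‖x‖ ^ 2 = c} = 0 := by
  have : Nonempty (Fin (2*k)) := ⟨⟨0, by omega⟩⟩
  rcases le_or_gt 0 c with hc | hc
  · have hset : {x : X | ‖x‖ ^ 2 = c} = Metric.sphere (0 : X) (Real.sqrt c) := by
      ext x
      simp only [Set.mem_setOf_eq, mem_sphere_zero_iff_norm]
      constructor
      · intro h; rw [← h, Real.sqrt_sq (norm_nonneg x)]
      · intro h; rw [h, Real.sq_sqrt hc]
    rw [hset]
    exact Measure.addHaar_sphere volume 0 _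
  · have hset : {x : X | ‖x‖ ^ 2 = c} = ∅ := by
      ext x
      simp only [Set.mem_setOf_eq, Set.mem_empty_iff_false, iff_false]
      intro h
      nlinarith [sq_nonneg ‖x‖]
    rw [hset, measure_empty]

lemma boundary_null (hk : 1 ≤ k) (a b ε : ℝ) : (volume : Measure (X × F))
    {q : X × F | ((a * q.2 ⟨0, hm⟩ + b) ^ 2 + ‖q.1‖ ^ 2 - 1) ^ 2 + ‖q.2‖ ^ 2 = ε ^ 2}
      = 0 := by
  have hc : Continuous fun q : X × F =>
      ((a * q.2 ⟨0, hm⟩ + b) ^ 2 + ‖q.1‖ ^ 2 - 1) ^ 2 + ‖q.2‖ ^ 2 := by fun_prop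
  have hmeas : MeasurableSet {q : X × F |
      ((a * q.2 ⟨0, hm⟩ + b) ^ 2 + ‖q.1‖ ^ 2 - 1) ^ 2 + ‖q.2‖ ^ 2 = ε ^ 2} :=
    measurableSet_eq_fun hc.measurable measurable_const
  rw [Measure.volume_eq_prod, Measure.prod_apply_symm hmeas]
  have hzero : ∀ y : F, (volume : Measure X)
      ((fun x => (x, y)) ⁻¹' {q : X × F |
        ((a * q.2 ⟨0, hm⟩ + b) ^ 2 + ‖q.1‖ ^ 2 - 1) ^ 2 + ‖q.2‖ ^ 2 = ε ^ 2}) = 0 := by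
    intro y
    set u : ℝ := (a * y ⟨0, hm⟩ + b) ^ 2 with hu
    set d : ℝ := ε ^ 2 - ‖y‖ ^ 2 with hd
    have hpre : ((fun x => (x, y)) ⁻¹' {q : X × F |
        ((a * q.2 ⟨0, hm⟩ + b) ^ 2 + ‖q.1‖ ^ 2 - 1) ^ 2 + ‖q.2‖ ^ 2 = ε ^ 2})
        = {x : X | (u + ‖x‖ ^ 2 - 1) ^ 2 = d} := by
      ext x
      simp only [Set.mem_preimage, Set.mem_setOf_eq, hu, hd]
      constructor <;> intro h <;> linarith
    rw [hpre]
    rcases lt_or_ge d 0 with hdneg | hdpos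
    · have : {x : X | (u + ‖x‖ ^ 2 - 1) ^ 2 = d} = ∅ := by
        ext x
        simp only [Set.mem_setOf_eq, Set.mem_empty_iff_false, iff_false]
        intro h
        nlinarith [sq_nonneg (u + ‖x‖ ^ 2 - 1)]
      rw [this, measure_empty]
    · refine measure_mono_null (fun x hx => ?_)
        (measure_union_null (normsq_null hk (1 - u + Real.sqrt d))
          (normsq_null hk (1 - u - Real.sqrt d)))
      · simp only [Set.mem_setOf_eq] at hx
        have h2 : (u + ‖x‖ ^ 2 - 1) ^ 2 = (Real.sqrt d) ^ 2 := by
          rw [Real.sq_sqrt hdpos]; exact hx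
        rcases sq_eq_sq_iff_eq_or_eq_neg.1 h2 with h | h
        · exact Set.mem_union_left _ (by simp only [Set.mem_setOf_eq]; linarith)
        · exact Set.mem_union_right _ (by simp only [Set.mem_setOf_eq]; linarith)
  rw [lintegral_congr hzero, lintegral_zero]

end

section
variable {k m : ℕ} (hm : 1 ≤ m)

local notation "X" => EuclideanSpace ℝ (Fin (2*k))
local notation "F" => EuclideanSpace ℝ (Fin m)

lemma g_cont (hk : 1 ≤ k) (a b ε : ℝ) (ha0 : 0 ≤ a) (ha1 : a ≤ 1)
    (hε0 : 0 ≤ ε) (hε1 : ε ≤ 1) :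
    ContinuousAt (fun s => ((volume : Measure (X × F))
      {q : X × F | ((a * q.2 ⟨0, hm⟩ + s) ^ 2 + ‖q.1‖ ^ 2 - 1) ^ 2 + ‖q.2‖ ^ 2 ≤ ε ^ 2}).toReal)
      b := by
  set H : ℝ → X × F → ℝ := fun t q =>
    ((a * q.2 ⟨0, hm⟩ + t) ^ 2 + ‖q.1‖ ^ 2 - 1) ^ 2 + ‖q.2‖ ^ 2 with hH
  set D : ℝ → Set (X × F) := fun η => {q | |H b q - ε ^ 2| ≤ η} with hDdef
  have hHcont : Continuous (H b) := by fun_prop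
  have hDmeas : ∀ η, MeasurableSet (D η) := fun η =>
    measurableSet_le (hHcont.sub continuous_const).abs.measurable measurable_const
  have hDmono : ∀ {η₁ η₂ : ℝ}, η₁ ≤ η₂ → D η₁ ⊆ D η₂ := fun h q hq => le_trans hq h
  have hDsub : ∀ η ≤ (1:ℝ), D η ⊆ Metric.closedBall (0 : X) 2 ×ˢ Metric.closedBall (0 : F) 2 := by
    intro η hη q hq
    simp only [hDdef, hH, Set.mem_setOf_eq] at hq
    have h2 := (abs_le.1 hq).2
    have hn1 : (0:ℝ) ≤ ‖q.1‖ := norm_nonneg _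
    have hn2 : (0:ℝ) ≤ ‖q.2‖ := norm_nonneg _
    constructor
    · rw [Metric.mem_closedBall, dist_zero_right]
      nlinarith [sq_nonneg (a * q.2 ⟨0, hm⟩ + b), sq_nonneg ‖q.2‖,
        sq_nonneg ((a * q.2 ⟨0, hm⟩ + b) ^ 2 + ‖q.1‖ ^ 2 - 1 - 2),
        sq_nonneg (‖q.1‖ - 2)]
    · rw [Metric.mem_closedBall, dist_zero_right]
      nlinarith [sq_nonneg ((a * q.2 ⟨0, hm⟩ + b) ^ 2 + ‖q.1‖ ^ 2 - 1),
        sq_nonneg (‖q.2‖ - 2)]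
  have hDfin : ∀ η ≤ (1:ℝ), (volume : Measure (X × F)) (D η) < ⊤ :=
    fun η hη => lt_of_le_of_lt (measure_mono (hDsub η hη)) (K_fin)
  have hiInter : (⋂ n : ℕ, D (1/((n:ℝ)+1))) = {q : X × F | H b q = ε ^ 2} := by
    ext q
    simp only [Set.mem_iInter, hDdef, Set.mem_setOf_eq]
    constructor
    · intro h
      by_contra hne
      have hpos : 0 < |H b q - ε ^ 2| := abs_pos.2 (sub_ne_zero.2 hne)
      obtain ⟨n, hn⟩ := exists_nat_one_div_lt hpos
      exact absurd (h n) (not_le.2 hn)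
    · intro h n
      rw [h, sub_self, abs_zero]
      positivity
  have hnull : (volume : Measure (X × F)) {q : X × F | H b q = ε ^ 2} = 0 :=
    boundary_null hm hk a b ε
  have htend : Filter.Tendsto (fun n : ℕ => (volume : Measure (X × F)) (D (1/((n:ℝ)+1))))
      Filter.atTop (nhds 0) := by
    have h1 := tendsto_measure_iInter_atTop (μ := (volume : Measure (X × F)))
      (s := fun n : ℕ => D (1/((n:ℝ)+1)))
      (fun n => (hDmeas _).nullMeasurableSet)
      (fun i j hij => hDmono (by
        apply one_div_le_one_div_of_le
        · positivity
        · exact_mod_cast add_le_add_left (Nat.cast_le.2 hij) 1))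
      (by exact ⟨0, (hDfin _ (by norm_num)).ne⟩)
    rw [hiInter, hnull] at h1
    exact h1
  rw [Metric.continuousAt_iff]
  intro r hr
  obtain ⟨n, hn⟩ : ∃ n : ℕ, (volume : Measure (X × F)) (D (1/((n:ℝ)+1))) < ENNReal.ofReal r := by
    have hpos : (0 : ENNReal) < ENNReal.ofReal r := ENNReal.ofReal_pos.2 hr
    exact (htend.eventually_lt_const hpos).exists
  set η : ℝ := 1/((n:ℝ)+1) with hη
  have hη0 : 0 < η := by positivity
  have hη1 : η ≤ 1 := by
    rw [hη]
    rw [div_le_one (by positivity)]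
    linarith [Nat.cast_nonneg (α := ℝ) n]
  refine ⟨η/100, by positivity, ?_⟩
  intro s hs
  rw [Real.dist_eq] at hs
  have hsb : 100 * |s - b| ≤ η := by
    have := le_of_lt hs
    nlinarith [abs_nonneg (s-b)]
  -- symmetric difference inclusions
  have key : ∀ s₁ s₂ : ℝ, |s₁ - s₂| ≤ 1 → ∀ q : X × F,
      H s₁ q ≤ ε ^ 2 → H s₂ q ≤ H s₁ q + 100 * |s₁ - s₂| := by
    intro s₁ s₂ h1 q hq
    have hc0 : (-1:ℝ) ≤ ‖q.1‖ ^ 2 - 1 := by nlinarith [sq_nonneg ‖q.1‖]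
    have hsq : ((a * q.2 ⟨0, hm⟩ + s₁) ^ 2 + (‖q.1‖ ^ 2 - 1)) ^ 2 ≤ 1 := by
      simp only [hH] at hq
      nlinarith [sq_nonneg ‖q.2‖]
    have := lip_aux (a * q.2 ⟨0, hm⟩ + s₁) (‖q.1‖ ^ 2 - 1) ‖q.2‖ (|s₁ - s₂|) (s₂ - s₁)
      hsq hc0 (by rw [abs_sub_comm]) h1
    have he : a * q.2 ⟨0, hm⟩ + s₁ + (s₂ - s₁) = a * q.2 ⟨0, hm⟩ + s₂ := by ring
    rw [he] at this
    simp only [hH]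
    calc ((a * q.2 ⟨0, hm⟩ + s₂) ^ 2 + ‖q.1‖ ^ 2 - 1) ^ 2 + ‖q.2‖ ^ 2
        = ((a * q.2 ⟨0, hm⟩ + s₂) ^ 2 + (‖q.1‖ ^ 2 - 1)) ^ 2 + ‖q.2‖ ^ 2 := by ring_nf
      _ ≤ ((a * q.2 ⟨0, hm⟩ + s₁) ^ 2 + (‖q.1‖ ^ 2 - 1)) ^ 2 + ‖q.2‖ ^ 2 + 100 * |s₁ - s₂| :=
          this
      _ = ((a * q.2 ⟨0, hm⟩ + s₁) ^ 2 + ‖q.1‖ ^ 2 - 1) ^ 2 + ‖q.2‖ ^ 2 + 100 * |s₁ - s₂| := by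
          ring_nf
  have hsb1 : |s - b| ≤ 1 := by
    nlinarith [abs_nonneg (s-b)]
  have hbs1 : |b - s| ≤ 1 := by rwa [abs_sub_comm]
  have hsub1 : {q : X × F | H s q ≤ ε ^ 2} ⊆ {q : X × F | H b q ≤ ε ^ 2} ∪ D (100 * |s - b|) := by
    intro q hq
    by_cases hqb : H b q ≤ ε ^ 2
    · exact Set.mem_union_left _ hqb
    · refine Set.mem_union_right _ ?_
      simp only [hDdef, Set.mem_setOf_eq]
      rw [abs_le]
      constructor
      · push_neg at hqb
        nlinarith [abs_nonneg (s - b)]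
      · have := key s b hsb1 q hq
        simp only [Set.mem_setOf_eq] at hq
        linarith
  have hsub2 : {q : X × F | H b q ≤ ε ^ 2} ⊆ {q : X × F | H s q ≤ ε ^ 2} ∪ D (100 * |s - b|) := by
    intro q hq
    by_cases hqs : H s q ≤ ε ^ 2
    · exact Set.mem_union_left _ hqs
    · refine Set.mem_union_right _ ?_
      simp only [hDdef, Set.mem_setOf_eq]
      rw [abs_le]
      have hHs := key b s hbs1 q hq
      rw [abs_sub_comm] at hHs
      simp only [Set.mem_setOf_eq] at hq
      push_neg at hqs
      constructor
      · linarith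
      · nlinarith [abs_nonneg (s - b)]
  have hmono100 : D (100 * |s - b|) ⊆ D η := hDmono hsb
  -- measures
  set Gs := (volume : Measure (X × F)) {q : X × F | H s q ≤ ε ^ 2} with hGs
  set Gb := (volume : Measure (X × F)) {q : X × F | H b q ≤ ε ^ 2} with hGb
  have hGsfin : Gs < ⊤ := lt_of_le_of_lt (measure_mono (g_subset hm a ε s hε0 hε1)) K_fin
  have hGbfin : Gb < ⊤ := lt_of_le_of_lt (measure_mono (g_subset hm a ε b hε0 hε1)) K_fin
  have hDη : (volume : Measure (X × F)) (D η) < ENNReal.ofReal r := hn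
  have hDηfin : (volume : Measure (X × F)) (D η) < ⊤ :=
    lt_of_lt_of_le hDη le_top
  have h1 : Gs ≤ Gb + (volume : Measure (X × F)) (D η) :=
    le_trans (measure_mono hsub1) (le_trans (measure_union_le _ _)
      (add_le_add le_rfl (measure_mono hmono100)))
  have h2 : Gb ≤ Gs + (volume : Measure (X × F)) (D η) :=
    le_trans (measure_mono hsub2) (le_trans (measure_union_le _ _)
      (add_le_add le_rfl (measure_mono hmono100)))
  rw [Real.dist_eq, abs_sub_lt_iff]
  have hDr : ((volume : Measure (X × F)) (D η)).toReal < r :=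
    (ENNReal.lt_ofReal_iff_toReal_lt hDηfin.ne).1 hDη
  have ht1 : Gs.toReal ≤ Gb.toReal + ((volume : Measure (X × F)) (D η)).toReal := by
    rw [← ENNReal.toReal_add hGbfin.ne hDηfin.ne]
    exact ENNReal.toReal_mono (by exact (ENNReal.add_lt_top.2 ⟨hGbfin, hDηfin⟩).ne) h1
  have ht2 : Gb.toReal ≤ Gs.toReal + ((volume : Measure (X × F)) (D η)).toReal := by
    rw [← ENNReal.toReal_add hGsfin.ne hDηfin.ne]
    exact ENNReal.toReal_mono (by exact (ENNReal.add_lt_top.2 ⟨hGsfin, hDηfin⟩).ne) h2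
  constructor
  · linarith
  · linarith

end

section
variable {k m : ℕ} (hm : 1 ≤ m)

local notation "X" => EuclideanSpace ℝ (Fin (2*k))
local notation "F" => EuclideanSpace ℝ (Fin m)

lemma g_measurable (a ε : ℝ) : Measurable (fun s : ℝ => (volume : Measure (X × F))
    {q : X × F | ((a * q.2 ⟨0, hm⟩ + s) ^ 2 + ‖q.1‖ ^ 2 - 1) ^ 2 + ‖q.2‖ ^ 2 ≤ ε ^ 2}) := by
  have hA : MeasurableSet {p : ℝ × (X × F) |
      ((a * p.2.2 ⟨0, hm⟩ + p.1) ^ 2 + ‖p.2.1‖ ^ 2 - 1) ^ 2 + ‖p.2.2‖ ^ 2 ≤ ε ^ 2} := by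
    have hc : Continuous fun p : ℝ × (X × F) =>
        ((a * p.2.2 ⟨0, hm⟩ + p.1) ^ 2 + ‖p.2.1‖ ^ 2 - 1) ^ 2 + ‖p.2.2‖ ^ 2 := by fun_prop
    exact measurableSet_le hc.measurable measurable_const
  exact measurable_measure_prodMk_left (ν := (volume : Measure (X × F))) hA

end

/-- With `W = {(x,y) : (|x|² − 1)² + |y|² ≤ ε²} ⊆ ℝⁿ × ℝᵐ` (`n = 2k+1`)
and `V(a,b)` the volume of `W ∩ {x₁ < a·y₁ + b}`: for every `ε ∈ (0,1)` there is `δ > 0`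
such that for `a, b ∈ [0, δ)` the derivative `∂V(a,b)/∂b` exists and equals the
`(N−1)`-dimensional volume of the section
`S(a,b) = {(x₂,…,xₙ,y) : (a·y₁+b, x₂,…,xₙ, y) ∈ W}`, i.e. of the orthogonal projection of
`W ∩ {x₁ = a·y₁ + b}` to the hyperplane `{x₁ = 0}`. -/
theorem volume_deriv_eq_section_volume (k m : ℕ) (hk : 1 ≤ k) (hm : 1 ≤ m)
    (ε : ℝ) (hε : ε ∈ Set.Ioo (0 : ℝ) 1) :
    ∃ δ > (0 : ℝ), ∀ a b : ℝ, a ∈ Set.Ico (0 : ℝ) δ → b ∈ Set.Ico (0 : ℝ) δ →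
      HasDerivAt (fun b' : ℝ =>
          (volume {p : EuclideanSpace ℝ (Fin (2 * k + 1)) × EuclideanSpace ℝ (Fin m) |
            ((‖p.1‖ ^ 2 - 1) ^ 2 + ‖p.2‖ ^ 2 ≤ ε ^ 2) ∧
              p.1 0 < a * p.2 ⟨0, hm⟩ + b'}).toReal)
        ((volume {q : EuclideanSpace ℝ (Fin (2 * k)) × EuclideanSpace ℝ (Fin m) |
            ((a * q.2 ⟨0, hm⟩ + b) ^ 2 + ‖q.1‖ ^ 2 - 1) ^ 2 + ‖q.2‖ ^ 2 ≤ ε ^ 2}).toReal)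
        b := by
  obtain ⟨hε0, hε1⟩ := hε
  refine ⟨1, one_pos, ?_⟩
  intro a b ha hb
  obtain ⟨ha0, ha1⟩ := ha
  obtain ⟨hb0, hb1⟩ := hb
  set g : ℝ → ENNReal := fun s =>
    (volume : Measure (EuclideanSpace ℝ (Fin (2 * k)) × EuclideanSpace ℝ (Fin m)))
      {q | ((a * q.2 ⟨0, hm⟩ + s) ^ 2 + ‖q.1‖ ^ 2 - 1) ^ 2 + ‖q.2‖ ^ 2 ≤ ε ^ 2} with hgdef
  have hgmeas : Measurable g := g_measurable hm a ε
  have hgfin : ∀ s, g s < ⊤ := fun s =>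
    lt_of_le_of_lt (measure_mono (g_subset hm a ε s hε0.le hε1.le)) K_fin
  have hvanish : ∀ s ≤ (-4:ℝ), g s = 0 := by
    intro s hs
    rw [hgdef]
    simp only
    rw [g_vanish hm a ε s ha0 (le_of_lt ha1) hε0.le hε1.le hs, measure_empty]
  have hcont : ContinuousAt (fun s => (g s).toReal) b :=
    g_cont hm hk a b ε ha0 ha1.le hε0.le hε1.le
  have hC : ∀ s, ‖(g s).toReal‖ ≤ ((volume : Measure _)
      (Metric.closedBall (0 : EuclideanSpace ℝ (Fin (2 * k))) 2 ×ˢ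
        Metric.closedBall (0 : EuclideanSpace ℝ (Fin m)) 2)).toReal := by
    intro s
    rw [Real.norm_eq_abs, abs_of_nonneg ENNReal.toReal_nonneg]
    exact ENNReal.toReal_mono K_fin.ne (measure_mono (g_subset hm a ε s hε0.le hε1.le))
  have hint : IntervalIntegrable (fun s => (g s).toReal) volume (-4) b := by
    rw [intervalIntegrable_iff]
    have hfin : volume (Set.uIoc (-4:ℝ) b) < ⊤ := by
      rw [Set.uIoc]; exact measure_Ioc_lt_top
    have hbnd : IntegrableOn (fun _ : ℝ => ((volume : Measure (EuclideanSpace ℝ (Fin (2*k)) ×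
        EuclideanSpace ℝ (Fin m))) (Metric.closedBall 0 2 ×ˢ Metric.closedBall 0 2)).toReal)
        (Set.uIoc (-4:ℝ) b) volume := integrableOn_const hfin.ne
    exact Integrable.mono' hbnd (hgmeas.ennreal_toReal).aestronglyMeasurable
      (Filter.Eventually.of_forall hC)
  have hsm : StronglyMeasurableAtFilter (fun s => (g s).toReal) (nhds b) :=
    (hgmeas.ennreal_toReal.stronglyMeasurable).stronglyMeasurableAtFilter
  have hderiv := intervalIntegral.integral_hasDerivAt_right hint hsm hcont
  refine HasDerivAt.congr_of_eventuallyEq hderiv ?_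
  have hmem : Set.Ioi (-4:ℝ) ∈ nhds b := Ioi_mem_nhds (by linarith)
  filter_upwards [hmem] with b' hb'
  have hb4' : (-4:ℝ) < b' := hb'
  have hb4 : (-4:ℝ) ≤ b' := le_of_lt hb4'
  rw [step1 hm a ε b']
  have hsplit : ∫⁻ s in Set.Iio b', g s = ∫⁻ s in Set.Ioo (-4:ℝ) b', g s := by
    have hun : Set.Iio b' = Set.Iic (-4:ℝ) ∪ Set.Ioo (-4:ℝ) b' := by
      ext x
      simp only [Set.mem_Iio, Set.mem_union, Set.mem_Iic, Set.mem_Ioo]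
      constructor
      · intro h
        rcases le_or_gt x (-4) with h' | h'
        · exact Or.inl h'
        · exact Or.inr ⟨h', h⟩
      · intro h
        rcases h with h | h
        · linarith
        · exact h.2
    have hdisj : Disjoint (Set.Iic (-4:ℝ)) (Set.Ioo (-4:ℝ) b') :=
      (Set.Iic_disjoint_Ioi le_rfl).mono_right Set.Ioo_subset_Ioi_self
    rw [hun, lintegral_union measurableSet_Ioo hdisj]
    have hz : ∫⁻ s in Set.Iic (-4:ℝ), g s = 0 := by
      rw [setLIntegral_congr_fun measurableSet_Iic
        (fun s hs => hvanish s hs)]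
      simp
    rw [hz, zero_add]
  rw [hsplit, intervalIntegral.integral_of_le hb4, integral_Ioc_eq_integral_Ioo,
    integral_toReal (hgmeas.aemeasurable.restrict) (Filter.Eventually.of_forall fun s => hgfin s)]
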